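/- For a C^4 one-dimensional function g and equidistant parameter nodes, the average of the two quadratic interpolants evaluated at 0, where one uses nodes {-a h, a h, 3 a h} and the other uses nodes {a h, -a h, -3 a h} (i.e., the reversed direction), equals the value at 0 of the cubic interpolant on the symmetric four-node stencil {-3 a h, -a h, a h, 3 a h}, and hence differs from g(0) by O(h^4). -/

import Mathlib

open Set Polynomial
open scoped Nat

private lemma idw_eq_id {g : ℝ → ℝ} (hg : ContDiff ℝ 4 g) {n : ℕ} (hn : (n : ℕ∞) ≤ 4)
    {s : Set ℝ} (hs : UniqueDiffOn ℝ s) {x : ℝ} (hx : x ∈ s) :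
    iteratedDerivWithin n g s x = iteratedDeriv n g x := by
  have hg' : ContDiff ℝ ((4:ℕ∞) : WithTop ℕ∞) g := by exact_mod_cast hg
  have h1 : HasFTaylorSeriesUpToOn ((4:ℕ∞) : WithTop ℕ∞) g (ftaylorSeries ℝ g) s :=
    (contDiff_iff_ftaylorSeries.mp hg').hasFTaylorSeriesUpToOn s
  have hn' : (n : WithTop ℕ∞) ≤ ((4:ℕ∞) : WithTop ℕ∞) := by exact_mod_cast hn
  have h2 := h1.eq_iteratedFDerivWithin_of_uniqueDiffOn hn' hs hx
  rw [iteratedDerivWithin_eq_iteratedFDerivWithin, iteratedDeriv_eq_iteratedFDeriv, ← h2]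
  rfl

private lemma taylor_bound_pos {g : ℝ → ℝ} (hg : ContDiff ℝ 4 g) {M b x : ℝ}
    (hM : ∀ t ∈ Icc (-b) b, |iteratedDeriv 4 g t| ≤ M)
    (hx0 : 0 < x) (hxb : x ≤ b) :
    |g x - ∑ k ∈ Finset.range 4, ((k ! : ℝ)⁻¹ * x ^ k) * iteratedDeriv k g 0|
      ≤ M * x ^ 4 / 24 := by
  have hud : UniqueDiffOn ℝ (Icc (0 : ℝ) x) := uniqueDiffOn_Icc hx0
  have hcd : ContDiffOn ℝ 3 g (Icc 0 x) := (hg.of_le (by norm_num)).contDiffOn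
  have hdiff : DifferentiableOn ℝ (iteratedDerivWithin 3 g (Icc 0 x)) (Ioo 0 x) := by
    have := hg.contDiffOn.differentiableOn_iteratedDerivWithin
      (m := 3) (s := Icc 0 x) (by norm_num) hud
    exact this.mono Ioo_subset_Icc_self
  obtain ⟨c, hc, hrem⟩ := taylor_mean_remainder_lagrange (n := 3) hx0.ne
    (by rwa [uIcc_of_le hx0.le]) (by rwa [uIcc_of_le hx0.le, uIoo_of_le hx0.le])
  rw [uIcc_of_le hx0.le] at hrem
  rw [uIoo_of_le hx0.le] at hc
  have hTay : taylorWithinEval g 3 (Icc 0 x) 0 x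
      = ∑ k ∈ Finset.range 4, ((k ! : ℝ)⁻¹ * x ^ k) * iteratedDeriv k g 0 := by
    rw [taylor_within_apply]
    refine Finset.sum_congr rfl fun k hk => ?_
    have hk4 : (k : ℕ∞) ≤ 4 := by
      have : k ≤ 3 := Nat.lt_succ_iff.mp (Finset.mem_range.mp hk)
      exact_mod_cast le_trans this (by norm_num)
    rw [idw_eq_id hg hk4 hud (left_mem_Icc.mpr hx0.le)]
    simp [smul_eq_mul]
    try ring
  have hc4 : iteratedDerivWithin 4 g (Icc 0 x) c = iteratedDeriv 4 g c :=
    idw_eq_id hg (by norm_num) hud (Ioo_subset_Icc_self hc)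
  have hcM : |iteratedDeriv 4 g c| ≤ M := by
    refine hM c ⟨?_, ?_⟩
    · have := hc.1; linarith
    · have := hc.2; linarith
  rw [← hTay, hrem, hc4]
  have habs : |iteratedDeriv 4 g c * (x - 0) ^ (3 + 1) / (3 + 1)!|
      = |iteratedDeriv 4 g c| * x ^ 4 / 24 := by
    rw [abs_div, abs_mul]
    have hxp : |(x - 0) ^ (3 + 1)| = x ^ 4 := by
      rw [sub_zero, abs_pow, abs_of_pos hx0]
    rw [hxp]
    norm_num [Nat.factorial]
  rw [habs]
  have hx4 : (0:ℝ) ≤ x ^ 4 := by positivity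
  have : |iteratedDeriv 4 g c| * x ^ 4 ≤ M * x ^ 4 :=
    mul_le_mul_of_nonneg_right hcM hx4
  linarith

private lemma taylor_bound {g : ℝ → ℝ} (hg : ContDiff ℝ 4 g) {M b x : ℝ}
    (hM : ∀ t ∈ Icc (-b) b, |iteratedDeriv 4 g t| ≤ M)
    (hx0 : x ≠ 0) (hxb : |x| ≤ b) :
    |g x - ∑ k ∈ Finset.range 4, ((k ! : ℝ)⁻¹ * x ^ k) * iteratedDeriv k g 0|
      ≤ M * x ^ 4 / 24 := by
  rcases hx0.lt_or_gt with hneg | hpos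
  · -- mirror: apply positive case to g ∘ neg at -x
    set G : ℝ → ℝ := fun y => g (-y) with hG
    have hGc : ContDiff ℝ 4 G := hg.comp contDiff_neg
    have hGM : ∀ t ∈ Icc (-b) b, |iteratedDeriv 4 G t| ≤ M := by
      intro t ht
      have he : iteratedDeriv 4 G t = (-1 : ℝ) ^ 4 • iteratedDeriv 4 g (-t) :=
        iteratedDeriv_comp_neg 4 g t
      rw [he]
      simp only [smul_eq_mul]
      norm_num
      exact hM (-t) ⟨by linarith [ht.2], by linarith [ht.1]⟩
    have hxpos : 0 < -x := by linarith
    have hxb' : -x ≤ b := by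
      have hax : |x| = -x := abs_of_neg hneg
      linarith [hax ▸ hxb]
    have hmain := taylor_bound_pos hGc hGM hxpos hxb'
    have hsum : ∑ k ∈ Finset.range 4, ((k ! : ℝ)⁻¹ * (-x) ^ k) * iteratedDeriv k G 0
        = ∑ k ∈ Finset.range 4, ((k ! : ℝ)⁻¹ * x ^ k) * iteratedDeriv k g 0 := by
      refine Finset.sum_congr rfl fun k _ => ?_
      have h1 : iteratedDeriv k G 0 = (-1 : ℝ) ^ k • iteratedDeriv k g 0 := by
        simpa using iteratedDeriv_comp_neg k g 0
      rw [h1, neg_pow, smul_eq_mul]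
      have h2 : ((-1 : ℝ) ^ k) * ((-1 : ℝ) ^ k) = 1 := by
        rw [← pow_add]
        exact Even.neg_one_pow ⟨k, rfl⟩
      linear_combination ((k ! : ℝ)⁻¹ * x ^ k * iteratedDeriv k g 0) * h2
    have hGx : G (-x) = g x := by simp [hG]
    rw [hGx, hsum] at hmain
    have hx4 : (-x) ^ 4 = x ^ 4 := by ring
    rw [hx4] at hmain
    exact hmain
  · exact taylor_bound_pos hg hM hpos (by rwa [abs_of_pos hpos] at hxb)

theorem stmt13 (a M : ℝ) (ha : 0 < a) (hM : 0 ≤ M) :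
    ∃ C : ℝ, ∀ (g : ℝ → ℝ) (h : ℝ) (pPlus pMinus q : Polynomial ℝ),
      0 < h → ContDiff ℝ 4 g →
      (∀ t ∈ Icc (-(3 * (a * h))) (3 * (a * h)), |iteratedDeriv 4 g t| ≤ M) →
      pPlus.natDegree ≤ 2 →
      pPlus.eval (-(a * h)) = g (-(a * h)) → pPlus.eval (a * h) = g (a * h) →
      pPlus.eval (3 * (a * h)) = g (3 * (a * h)) →
      pMinus.natDegree ≤ 2 →
      pMinus.eval (a * h) = g (a * h) → pMinus.eval (-(a * h)) = g (-(a * h)) →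
      pMinus.eval (-(3 * (a * h))) = g (-(3 * (a * h))) →
      q.natDegree ≤ 3 →
      q.eval (-(3 * (a * h))) = g (-(3 * (a * h))) →
      q.eval (-(a * h)) = g (-(a * h)) → q.eval (a * h) = g (a * h) →
      q.eval (3 * (a * h)) = g (3 * (a * h)) →
      (pPlus.eval 0 + pMinus.eval 0) / 2 = q.eval 0 ∧
      |q.eval 0 - g 0| ≤ C * h ^ 4 := by
  refine ⟨a ^ 4 * M, ?_⟩
  intro g h pPlus pMinus q hh hg hMg hdp hp1 hp2 hp3 hdm hm1 hm2 hm3 hdq hq1 hq2 hq3 hq4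
  set t : ℝ := a * h with ht
  have htpos : 0 < t := mul_pos ha hh
  have hPeval : ∀ x : ℝ, pPlus.eval x
      = pPlus.coeff 0 + pPlus.coeff 1 * x + pPlus.coeff 2 * x ^ 2 := by
    intro x
    rw [Polynomial.eval_eq_sum_range' (lt_of_le_of_lt hdp (by norm_num : 2 < 3))]
    simp [Finset.sum_range_succ]
  have hMeval : ∀ x : ℝ, pMinus.eval x
      = pMinus.coeff 0 + pMinus.coeff 1 * x + pMinus.coeff 2 * x ^ 2 := by
    intro x
    rw [Polynomial.eval_eq_sum_range' (lt_of_le_of_lt hdm (by norm_num : 2 < 3))]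
    simp [Finset.sum_range_succ]
  have hQeval : ∀ x : ℝ, q.eval x
      = q.coeff 0 + q.coeff 1 * x + q.coeff 2 * x ^ 2 + q.coeff 3 * x ^ 3 := by
    intro x
    rw [Polynomial.eval_eq_sum_range' (lt_of_le_of_lt hdq (by norm_num : 3 < 4))]
    simp [Finset.sum_range_succ]
    try ring
  have hPval : pPlus.eval 0
      = 3/8 * g (-t) + 3/4 * g t - 1/8 * g (3*t) := by
    have e1 := (hPeval (-t)).symm.trans hp1
    have e2 := (hPeval t).symm.trans hp2
    have e3 := (hPeval (3*t)).symm.trans hp3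
    rw [hPeval 0]
    linear_combination (3/8 : ℝ) * e1 + (3/4 : ℝ) * e2 - (1/8 : ℝ) * e3
  have hMval : pMinus.eval 0
      = 3/8 * g t + 3/4 * g (-t) - 1/8 * g (-(3*t)) := by
    have e1 := (hMeval t).symm.trans hm1
    have e2 := (hMeval (-t)).symm.trans hm2
    have e3 := (hMeval (-(3*t))).symm.trans hm3
    rw [hMeval 0]
    linear_combination (3/8 : ℝ) * e1 + (3/4 : ℝ) * e2 - (1/8 : ℝ) * e3
  have hQval : q.eval 0
      = 9/16 * (g t + g (-t)) - 1/16 * (g (3*t) + g (-(3*t))) := by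
    have e1 := (hQeval (-(3*t))).symm.trans hq1
    have e2 := (hQeval (-t)).symm.trans hq2
    have e3 := (hQeval t).symm.trans hq3
    have e4 := (hQeval (3*t)).symm.trans hq4
    rw [hQeval 0]
    linear_combination (-(1/16) : ℝ) * e1 + (9/16 : ℝ) * e2 + (9/16 : ℝ) * e3
      + (-(1/16) : ℝ) * e4
  constructor
  · rw [hPval, hMval, hQval]; ring
  · set P : ℝ → ℝ := fun x =>
      ∑ k ∈ Finset.range 4, ((k ! : ℝ)⁻¹ * x ^ k) * iteratedDeriv k g 0 with hP
    have hPx : ∀ x : ℝ, P x = g 0 + iteratedDeriv 1 g 0 * x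
        + iteratedDeriv 2 g 0 / 2 * x ^ 2 + iteratedDeriv 3 g 0 / 6 * x ^ 3 := by
      intro x
      simp [hP, Finset.sum_range_succ, Nat.factorial]
      try ring
    have hb : ∀ x : ℝ, x ≠ 0 → |x| ≤ 3 * t → |g x - P x| ≤ M * x ^ 4 / 24 := by
      intro x hx0 hxb
      exact taylor_bound hg hMg hx0 hxb
    have h1 := hb t htpos.ne' (by rw [abs_of_pos htpos]; linarith)
    have h2 := hb (-t) (by intro hc; nlinarith) (by rw [abs_neg, abs_of_pos htpos]; linarith)
    have h3 := hb (3*t) (by positivity) (le_of_eq (abs_of_pos (by linarith)))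
    have h4 := hb (-(3*t)) (by intro hc; nlinarith)
      (le_of_eq (by rw [abs_neg]; exact abs_of_pos (by linarith)))
    have hcomb : q.eval 0 - g 0
        = 9/16 * ((g t - P t) + (g (-t) - P (-t)))
          - 1/16 * ((g (3*t) - P (3*t)) + (g (-(3*t)) - P (-(3*t)))) := by
      rw [hQval, hPx t, hPx (-t), hPx (3*t), hPx (-(3*t))]
      ring
    rw [hcomb]
    obtain ⟨a1, b1⟩ := abs_le.mp h1
    obtain ⟨a2, b2⟩ := abs_le.mp h2
    obtain ⟨a3, b3⟩ := abs_le.mp h3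
    obtain ⟨a4, b4⟩ := abs_le.mp h4
    rw [abs_le]
    have ht4 : t ^ 4 = a ^ 4 * h ^ 4 := by rw [ht]; ring
    have hnt4 : (-t) ^ 4 = t ^ 4 := by ring
    have h3t4 : (3*t) ^ 4 = 81 * t ^ 4 := by ring
    have hn3t4 : (-(3*t)) ^ 4 = 81 * t ^ 4 := by ring
    rw [hnt4] at a2 b2
    rw [h3t4] at a3 b3
    rw [hn3t4] at a4 b4
    have h81 : M * (81 * t ^ 4) / 24 = 81 * (M * t ^ 4) / 24 := by ring
    rw [h81] at a3 b3 a4 b4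
    have ht4nn : 0 ≤ t ^ 4 := by positivity
    have hgoal : a ^ 4 * M * h ^ 4 = M * t ^ 4 := by rw [ht]; ring
    rw [hgoal]
    constructor <;> linarith [mul_nonneg hM ht4nn]
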